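/- Let β > 0, γ > 0 and 0 < α < γ. Then the expected remaining life-length at age 0 under Gompertz–Makeham mortality satisfies e₀(α,β,γ) = (1/α)·(1 − (β/γ)^{α/γ} · e^{β/γ} · Γ(1 − α/γ) · [1 − G(β/γ; 1 − α/γ, 1)]), where Γ denotes the gamma function and G(·;η,1) the gamma distribution function with shape η and scale 1. -/

import Mathlib

open MeasureTheory Set Filter

/-- Gompertz–Makeham survival function `l(x; α, β, γ) = exp(-αx - (β/γ)(e^{γx} - 1))`. -/
noncomputable def survival (α β γ x : ℝ) : ℝ :=
  Real.exp (-α * x - β / γ * (Real.exp (γ * x) - 1))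

/-- Expected remaining life-length at age 0: `e₀(α,β,γ) = ∫₀^∞ l(t;α,β,γ) dt`. -/
noncomputable def e0 (α β γ : ℝ) : ℝ :=
  ∫ t in Set.Ioi (0 : ℝ), survival α β γ t

/-- Gamma distribution function with shape `η` and scale 1:
`G(z; η, 1) = (1/Γ(η)) ∫₀^z y^{η-1} e^{-y} dy`. -/
noncomputable def gammaCDF' (z η : ℝ) : ℝ :=
  (1 / Real.Gamma η) * ∫ y in (0:ℝ)..z, y ^ (η - 1) * Real.exp (-y)

theorem e0_eq_gamma_expression (α β γ : ℝ)
    (hβ : 0 < β) (hγ : 0 < γ) (hα : 0 < α) (hαγ : α < γ) :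
    e0 α β γ =
      (1 / α) * (1 - (β / γ) ^ (α / γ) * Real.exp (β / γ) * Real.Gamma (1 - α / γ) *
        (1 - gammaCDF' (β / γ) (1 - α / γ))) := by
  set z : ℝ := β / γ with hz_def
  set s : ℝ := α / γ with hs_def
  have hz : 0 < z := div_pos hβ hγ
  have hs : 0 < s := div_pos hα hγ
  have hs1 : s < 1 := (div_lt_one hγ).mpr hαγ
  set η : ℝ := 1 - s with hη_def
  have hη : 0 < η := by simp only [hη_def]; linarith
  have hsγ : s * γ = α := div_mul_cancel₀ α hγ.ne'
  -- the auxiliary function for FTC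
  set g : ℝ → ℝ := fun t => -Real.exp (-α * t - z * (Real.exp (γ * t) - 1)) with hg_def
  set g' : ℝ → ℝ := fun t =>
    (α + z * (Real.exp (γ * t) * γ)) * Real.exp (-α * t - z * (Real.exp (γ * t) - 1))
    with hg'_def
  have hderiv : ∀ t : ℝ, HasDerivAt g (g' t) t := by
    intro t
    have h1 : HasDerivAt (fun t : ℝ => γ * t) γ t := by
      simpa using (hasDerivAt_id t).const_mul γ
    have h2 : HasDerivAt (fun t : ℝ => Real.exp (γ * t)) (Real.exp (γ * t) * γ) t := h1.exp
    have h3 : HasDerivAt (fun t : ℝ => -α * t - z * (Real.exp (γ * t) - 1))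
        (-α - z * (Real.exp (γ * t) * γ)) t := by
      have := ((h2.sub_const 1).const_mul z)
      have h := ((hasDerivAt_id t).const_mul (-α)).sub this
      simp only [id, mul_one] at h
      exact h
    have h4 := h3.exp
    have h5 := h4.neg
    refine h5.congr_deriv ?_
    simp only [hg'_def]
    ring
  have g'pos : ∀ t ∈ Ioi (0:ℝ), 0 ≤ g' t := by
    intro t _
    apply mul_nonneg _ (Real.exp_pos _).le
    have : 0 ≤ z * (Real.exp (γ * t) * γ) :=
      mul_nonneg hz.le (mul_nonneg (Real.exp_pos _).le hγ.le)
    linarith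
  have htends : Tendsto g atTop (nhds 0) := by
    have hA : Tendsto (fun t : ℝ => α * t) atTop atTop :=
      Tendsto.const_mul_atTop hα tendsto_id
    have hB : Tendsto (fun t : ℝ => z * (Real.exp (γ * t) - 1)) atTop atTop := by
      apply Tendsto.const_mul_atTop hz
      apply tendsto_atTop_add_const_right
      exact Real.tendsto_exp_atTop.comp (Tendsto.const_mul_atTop hγ tendsto_id)
    have hC : Tendsto (fun t : ℝ => α * t + z * (Real.exp (γ * t) - 1)) atTop atTop :=
      hA.atTop_add_atTop hB
    have hD : Tendsto (fun t : ℝ => -α * t - z * (Real.exp (γ * t) - 1)) atTop atBot := by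
      have := tendsto_neg_atTop_atBot.comp hC
      refine this.congr fun t => ?_
      simp; ring
    have := (Real.tendsto_exp_atBot.comp hD).neg
    simpa [hg_def, neg_mul] using this
  have hg'int : IntegrableOn g' (Ioi (0:ℝ)) := by
    refine integrableOn_Ioi_deriv_of_nonneg' (fun t _ => hderiv t) g'pos htends
  have key1 : ∫ t in Ioi (0:ℝ), g' t = 1 := by
    rw [integral_Ioi_of_hasDerivAt_of_nonneg' (fun t _ => hderiv t) g'pos htends]
    simp [hg_def]
  -- integrability of survival
  have hsurv_cont : Continuous (fun t : ℝ => survival α β γ t) := by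
    unfold survival
    fun_prop
  have hsurv_int : IntegrableOn (fun t : ℝ => survival α β γ t) (Ioi (0:ℝ)) := by
    have hexp : IntegrableOn (fun t : ℝ => Real.exp (-α * t)) (Ioi (0:ℝ)) :=
      exp_neg_integrableOn_Ioi 0 hα
    refine hexp.mono' hsurv_cont.aestronglyMeasurable ?_
    filter_upwards [ae_restrict_mem measurableSet_Ioi] with t ht
    simp only [survival, ← hz_def, Real.norm_eq_abs, abs_of_pos (Real.exp_pos _)]
    apply Real.exp_le_exp.2
    have h1 : (1:ℝ) ≤ Real.exp (γ * t) :=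
      Real.one_le_exp (mul_nonneg hγ.le (le_of_lt ht))
    have : 0 ≤ z * (Real.exp (γ * t) - 1) := mul_nonneg hz.le (by linarith)
    linarith
  have hdecomp : ∀ t : ℝ, g' t = α * survival α β γ t
      + (z * (Real.exp (γ * t) * γ)) * survival α β γ t := by
    intro t
    simp only [hg'_def, survival, ← hz_def]
    ring
  have hJint : IntegrableOn
      (fun t : ℝ => (z * (Real.exp (γ * t) * γ)) * survival α β γ t) (Ioi (0:ℝ)) := by
    have := hg'int.sub (hsurv_int.const_mul α)
    refine this.congr (Filter.Eventually.of_forall fun t => ?_)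
    simp only [Pi.sub_apply]
    rw [hdecomp t]; ring
  have hsplit : (1:ℝ) = α * e0 α β γ
      + ∫ t in Ioi (0:ℝ), (z * (Real.exp (γ * t) * γ)) * survival α β γ t := by
    rw [← key1, e0, ← integral_const_mul,
      ← integral_add (hsurv_int.const_mul α) hJint]
    exact setIntegral_congr_fun measurableSet_Ioi fun t _ => hdecomp t
  -- substitution y = z * exp(γ t)
  have hηs : η - 1 = -s := by rw [hη_def]; ring
  have hGF : ∀ t : ℝ, (z ^ s * Real.exp z) *
      ((z * Real.exp (γ * t)) ^ (η - 1) * Real.exp (-(z * Real.exp (γ * t))))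
      = survival α β γ t := by
    intro t
    have e1 : (z * Real.exp (γ * t)) ^ (-s) = z ^ (-s) * Real.exp (γ * t * (-s)) := by
      rw [Real.mul_rpow hz.le (Real.exp_pos _).le, ← Real.exp_mul]
    rw [hηs, e1]
    rw [show z ^ s * Real.exp z * (z ^ (-s) * Real.exp (γ * t * -s)
          * Real.exp (-(z * Real.exp (γ * t))))
        = (z ^ s * z ^ (-s)) * (Real.exp z * Real.exp (γ * t * -s)
          * Real.exp (-(z * Real.exp (γ * t)))) from by ring]
    rw [← Real.rpow_add hz, add_neg_cancel, Real.rpow_zero, one_mul,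
      ← Real.exp_add, ← Real.exp_add]
    simp only [survival, ← hz_def]
    congr 1
    have h2 : γ * t * -s = -α * t := by rw [← hsγ]; ring
    rw [h2]; ring
  have hsub : ∫ t in Ioi (0:ℝ),
        ((fun y : ℝ => (z ^ s * Real.exp z) * (y ^ (η - 1) * Real.exp (-y)))
          ∘ (fun t : ℝ => z * Real.exp (γ * t))) t * (z * (Real.exp (γ * t) * γ))
      = ∫ u in Ioi ((fun t : ℝ => z * Real.exp (γ * t)) 0),
          (z ^ s * Real.exp z) * (u ^ (η - 1) * Real.exp (-u)) := by
    apply integral_comp_mul_deriv_Ioi (f' := fun t => z * (Real.exp (γ * t) * γ))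
    · exact (continuous_const.mul (Real.continuous_exp.comp
        (continuous_const.mul continuous_id))).continuousOn
    · exact Tendsto.const_mul_atTop hz
        (Real.tendsto_exp_atTop.comp (Tendsto.const_mul_atTop hγ tendsto_id))
    · intro x _
      have h1 : HasDerivAt (fun t : ℝ => γ * t) γ x := by
        simpa using (hasDerivAt_id x).const_mul γ
      exact (h1.exp.const_mul z).hasDerivWithinAt
    · have hsubset : (fun t : ℝ => z * Real.exp (γ * t)) '' Ioi (0:ℝ) ⊆ Ioi (0:ℝ) := by
        rintro y ⟨t, _, rfl⟩; exact mul_pos hz (Real.exp_pos _)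
      refine ContinuousOn.mono ?_ hsubset
      intro y hy
      exact (ContinuousAt.continuousWithinAt (by
        exact ((Real.continuousAt_rpow_const y _ (Or.inl (ne_of_gt hy))).mul
          ((Real.continuous_exp.comp continuous_neg).continuousAt)).const_mul _))
    · have hsubset : (fun t : ℝ => z * Real.exp (γ * t)) '' Ici (0:ℝ) ⊆ Ioi (0:ℝ) := by
        rintro y ⟨t, _, rfl⟩; exact mul_pos hz (Real.exp_pos _)
      refine IntegrableOn.mono_set ?_ hsubset
      have hGi := (Real.GammaIntegral_convergent hη).const_mul (z ^ s * Real.exp z)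
      refine hGi.congr (Filter.Eventually.of_forall fun y => ?_)
      ring
    · rw [integrableOn_Ici_iff_integrableOn_Ioi]
      refine hJint.congr (Filter.Eventually.of_forall fun t => ?_)
      simp only [Function.comp_apply]
      rw [hGF t]; ring
  have hJval : ∫ t in Ioi (0:ℝ), (z * (Real.exp (γ * t) * γ)) * survival α β γ t
      = (z ^ s * Real.exp z) * ∫ y in Ioi z, y ^ (η - 1) * Real.exp (-y) := by
    have h1 : ∫ t in Ioi (0:ℝ), (z * (Real.exp (γ * t) * γ)) * survival α β γ t
        = ∫ t in Ioi (0:ℝ),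
            ((fun y : ℝ => (z ^ s * Real.exp z) * (y ^ (η - 1) * Real.exp (-y)))
              ∘ (fun t : ℝ => z * Real.exp (γ * t))) t * (z * (Real.exp (γ * t) * γ)) := by
      refine setIntegral_congr_fun measurableSet_Ioi fun t _ => ?_
      simp only [Function.comp_apply]
      rw [hGF t]; ring
    rw [h1, hsub, ← integral_const_mul]
    simp
  -- Gamma tail identity
  have hΓne : Real.Gamma η ≠ 0 := (Real.Gamma_pos_of_pos hη).ne'
  have hint1 : IntegrableOn (fun y : ℝ => Real.exp (-y) * y ^ (η - 1)) (Ioc 0 z) :=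
    (Real.GammaIntegral_convergent hη).mono_set Ioc_subset_Ioi_self
  have hint2 : IntegrableOn (fun y : ℝ => Real.exp (-y) * y ^ (η - 1)) (Ioi z) :=
    (Real.GammaIntegral_convergent hη).mono_set (Ioi_subset_Ioi hz.le)
  have hΓsplit : Real.Gamma η
      = (∫ y in (0:ℝ)..z, y ^ (η - 1) * Real.exp (-y))
        + ∫ y in Ioi z, y ^ (η - 1) * Real.exp (-y) := by
    rw [Real.Gamma_eq_integral hη, ← Set.Ioc_union_Ioi_eq_Ioi hz.le,
      setIntegral_union (Set.Ioc_disjoint_Ioi le_rfl) measurableSet_Ioi hint1 hint2,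
      intervalIntegral.integral_of_le hz.le]
    congr 1
    · exact setIntegral_congr_fun measurableSet_Ioc fun y _ => mul_comm _ _
    · exact setIntegral_congr_fun measurableSet_Ioi fun y _ => mul_comm _ _
  have hgC : Real.Gamma η * (1 - gammaCDF' z η)
      = ∫ y in Ioi z, y ^ (η - 1) * Real.exp (-y) := by
    unfold gammaCDF'
    field_simp
    linarith [hΓsplit]
  rw [mul_assoc (z ^ s * Real.exp z), mul_assoc, hgC] -- may need adjusting
  rw [hJval] at hsplit
  have hαne : α ≠ 0 := hα.ne'
  field_simp
  linarith [hsplit]
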